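/- Let A and B be finite types, let k ≥ 2 be an integer, and let ρ be a density matrix on A × B. Then ρ ∈ PPT#_k(A:B) if and only if ρ^{T_B} is positive semidefinite. -/

import Mathlib

open Matrix
open scoped ComplexOrder

/-- Total positive semidefinite square root: the PSD square root of `M` if `M` is PSD,
and junk value `0` otherwise. -/
noncomputable def msqrt {n : Type*} [Fintype n] [DecidableEq n]
    (M : Matrix n n ℂ) : Matrix n n ℂ :=
  letI := Classical.dec M.PosSemidef
  if h : M.PosSemidef then
    h.1.eigenvectorUnitary.1 * diagonal ((↑) ∘ (Real.sqrt ·) ∘ h.1.eigenvalues) *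
      (star h.1.eigenvectorUnitary : Matrix n n ℂ)
  else 0

/-- The trace norm `‖M‖₁ = tr √(Mᴴ M)` of a complex matrix, as a real number. -/
noncomputable def traceNorm {n : Type*} [Fintype n] [DecidableEq n]
    (M : Matrix n n ℂ) : ℝ :=
  (msqrt (Mᴴ * M)).trace.re

/-- The partial transpose over the second party `B`:
`M^{T_B}((a,b),(a',b')) = M((a,b'),(a',b))`. -/
def ptB {A B : Type*} (M : Matrix (A × B) (A × B) ℂ) : Matrix (A × B) (A × B) ℂ :=
  fun x y => M (x.1, y.2) (y.1, x.2)

/-- The matrix absolute value `|M| = √(Mᴴ M)`. -/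
noncomputable def matAbs {n : Type*} [Fintype n] [DecidableEq n]
    (M : Matrix n n ℂ) : Matrix n n ℂ :=
  msqrt (Mᴴ * M)

/-- The set `PPT#_k(A:B)`: positive semidefinite `ω₁` such that there exist `ω₂, …, ω_k` with
`|ω_i^{T_B}| ⪯ ω_{i+1}` for all `1 ≤ i ≤ k−1` and `‖ω_k^{T_B}‖₁ ≤ 1`. -/
def PPThashSet {A B : Type*} [Fintype A] [Fintype B] [DecidableEq A] [DecidableEq B]
    (k : ℕ) : Set (Matrix (A × B) (A × B) ℂ) :=
  {σ | σ.PosSemidef ∧ ∃ ω : ℕ → Matrix (A × B) (A × B) ℂ, ω 1 = σ ∧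
    (∀ i, 1 ≤ i → i ≤ k - 1 → (ω (i + 1) - matAbs (ptB (ω i))).PosSemidef) ∧
    traceNorm (ptB (ω k)) ≤ 1}

section Aux

variable {n : Type*} [Fintype n] [DecidableEq n]

open scoped MatrixOrder

lemma msqrt_eq {M : Matrix n n ℂ} (h : M.PosSemidef) : msqrt M = CFC.sqrt M := by
  unfold msqrt
  rw [dif_pos h]
  rw [CFC.sqrt_eq_cfc, cfc_nnreal_eq_real _ M h.nonneg, h.1.cfc_eq, IsHermitian.cfc,
    Unitary.conjStarAlgAut_apply]
  congr 3
  funext i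
  simp [h.eigenvalues_nonneg i]

lemma matAbs_of_posSemidef {M : Matrix n n ℂ} (h : M.PosSemidef) : matAbs M = M := by
  have h2 : (M ^ 2).PosSemidef := h.pow 2
  have : Mᴴ * M = M ^ 2 := by rw [h.isHermitian.eq, pow_two]
  rw [matAbs, this, msqrt_eq h2, CFC.sqrt_sq M h.nonneg]

lemma matAbs_posSemidef (M : Matrix n n ℂ) : (matAbs M).PosSemidef := by
  rw [matAbs, msqrt_eq (posSemidef_conjTranspose_mul_self M)]
  exact (CFC.sqrt_nonneg _).posSemidef

/-- The absolute value of a Hermitian matrix via its spectral decomposition. -/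
lemma matAbs_hermitian {M : Matrix n n ℂ} (hM : M.IsHermitian) :
    matAbs M = (hM.eigenvectorUnitary : Matrix n n ℂ) *
      diagonal (RCLike.ofReal ∘ fun i => |hM.eigenvalues i|) *
      star (hM.eigenvectorUnitary : Matrix n n ℂ) := by
  set U : Matrix n n ℂ := (hM.eigenvectorUnitary : Matrix n n ℂ) with hU
  set N : Matrix n n ℂ := U * diagonal (RCLike.ofReal ∘ fun i => |hM.eigenvalues i|) * star U
    with hN
  have hUU : star U * U = 1 := (Matrix.mem_unitaryGroup_iff').mp hM.eigenvectorUnitary.2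
  have hNpsd : N.PosSemidef := by
    rw [hN, Matrix.star_eq_conjTranspose]
    refine (posSemidef_diagonal_iff.mpr fun i => ?_).mul_mul_conjTranspose_same U
    simp
  have hsq : N ^ 2 = Mᴴ * M := by
    rw [hM.eq, pow_two, hN]
    conv_rhs => rw [hM.spectral_theorem, Unitary.conjStarAlgAut_apply]
    rw [← hU]
    have : ∀ d : n → ℂ, (U * diagonal d * star U) * (U * diagonal d * star U)
        = U * (diagonal d * diagonal d) * star U := by
      intro d
      calc (U * diagonal d * star U) * (U * diagonal d * star U)
          = U * diagonal d * (star U * U) * diagonal d * star U := by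
            simp only [Matrix.mul_assoc]
        _ = U * (diagonal d * diagonal d) * star U := by
            rw [hUU]; simp only [Matrix.mul_one, Matrix.mul_assoc]
    rw [this, this]
    congr 2
    rw [diagonal_mul_diagonal, diagonal_mul_diagonal]
    funext i j
    rcases eq_or_ne i j with rfl | hij
    · simp only [diagonal_apply_eq, Function.comp_apply]
      rw [← RCLike.ofReal_mul, ← RCLike.ofReal_mul, abs_mul_abs_self]
    · rw [diagonal_apply_ne _ hij, diagonal_apply_ne _ hij]
  have := (CFC.sqrt_unique (a := Mᴴ * M) (by rw [← sq]; exact hsq) hNpsd.nonneg).symm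
  rw [matAbs, msqrt_eq (posSemidef_conjTranspose_mul_self M), ← this]

lemma trace_conj_unitary (U : Matrix.unitaryGroup n ℂ) (D : Matrix n n ℂ) :
    ((U : Matrix n n ℂ) * D * star (U : Matrix n n ℂ)).trace = D.trace := by
  rw [trace_mul_cycle, (Matrix.mem_unitaryGroup_iff').mp U.2, Matrix.one_mul]

lemma trace_matAbs_hermitian {M : Matrix n n ℂ} (hM : M.IsHermitian) :
    (matAbs M).trace = ((∑ i, |hM.eigenvalues i| : ℝ) : ℂ) := by
  rw [matAbs_hermitian hM, trace_conj_unitary, trace_diagonal]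
  push_cast
  rfl

lemma trace_eq_sum_eigenvalues {M : Matrix n n ℂ} (hM : M.IsHermitian) :
    M.trace = ((∑ i, hM.eigenvalues i : ℝ) : ℂ) := by
  conv_lhs => rw [hM.spectral_theorem, Unitary.conjStarAlgAut_apply]
  rw [trace_conj_unitary, trace_diagonal]
  push_cast
  rfl

lemma traceNorm_hermitian {M : Matrix n n ℂ} (hM : M.IsHermitian) :
    traceNorm M = ∑ i, |hM.eigenvalues i| := by
  have : traceNorm M = (matAbs M).trace.re := rfl
  rw [this, trace_matAbs_hermitian hM, Complex.ofReal_re]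

lemma trace_re_le_traceNorm {M : Matrix n n ℂ} (hM : M.IsHermitian) :
    M.trace.re ≤ traceNorm M := by
  rw [traceNorm_hermitian hM, trace_eq_sum_eigenvalues hM, Complex.ofReal_re]
  exact Finset.sum_le_sum fun i _ => le_abs_self _

lemma posSemidef_of_traceNorm_le {M : Matrix n n ℂ} (hM : M.IsHermitian)
    (h : traceNorm M ≤ M.trace.re) : M.PosSemidef := by
  rw [traceNorm_hermitian hM, trace_eq_sum_eigenvalues hM, Complex.ofReal_re] at h
  refine hM.posSemidef_iff_eigenvalues_nonneg.mpr fun i => (?_ : (0:ℝ) ≤ hM.eigenvalues i)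
  by_contra hneg
  push_neg at hneg
  have key : ∀ j, hM.eigenvalues j ≤ |hM.eigenvalues j| := fun j => le_abs_self _
  have hstrict : ∑ j, hM.eigenvalues j < ∑ j, |hM.eigenvalues j| := by
    refine Finset.sum_lt_sum (fun j _ => key j) ⟨i, Finset.mem_univ i, ?_⟩
    rw [abs_of_neg hneg]
    linarith
  linarith

lemma posSemidef_traceNorm_eq {M : Matrix n n ℂ} (hM : M.PosSemidef) :
    traceNorm M = M.trace.re := by
  have : traceNorm M = (matAbs M).trace.re := rfl
  rw [this, matAbs_of_posSemidef hM]

lemma trace_re_mono {P Q : Matrix n n ℂ} (h : (P - Q).PosSemidef) :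
    Q.trace.re ≤ P.trace.re := by
  have h1 : (0:ℝ) ≤ (P - Q).trace.re := by
    rw [trace_eq_sum_eigenvalues h.isHermitian, Complex.ofReal_re]
    exact Finset.sum_nonneg fun i _ => h.eigenvalues_nonneg i
  rw [trace_sub, Complex.sub_re] at h1
  linarith

end Aux

section PtB

variable {A B : Type*}

lemma ptB_ptB (M : Matrix (A × B) (A × B) ℂ) : ptB (ptB M) = M := rfl

lemma trace_ptB [Fintype A] [Fintype B] (M : Matrix (A × B) (A × B) ℂ) :
    (ptB M).trace = M.trace := rfl

lemma isHermitian_ptB {M : Matrix (A × B) (A × B) ℂ} (hM : M.IsHermitian) :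
    (ptB M).IsHermitian := by
  ext x y
  have := congrFun (congrFun hM (x.1, y.2)) (y.1, x.2)
  simpa [ptB, Matrix.conjTranspose_apply] using this

end PtB

theorem mem_PPThashSet_iff_ppt {A B : Type*}
    [Fintype A] [Fintype B] [DecidableEq A] [DecidableEq B]
    (k : ℕ) (hk : 2 ≤ k) (ρ : Matrix (A × B) (A × B) ℂ)
    (hρ : ρ.PosSemidef) (htr : ρ.trace = 1) :
    ρ ∈ PPThashSet (A := A) (B := B) k ↔ (ptB ρ).PosSemidef := by
  constructor
  · rintro ⟨-, ω, hω1, hchain, hnorm⟩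
    -- ω i is PSD and trace norms are monotone along the chain
    have main : ∀ i, 1 ≤ i → i ≤ k → (ω i).PosSemidef ∧
        traceNorm (ptB (ω 1)) ≤ traceNorm (ptB (ω i)) := by
      intro i
      induction i with
      | zero => intro h; omega
      | succ j ih =>
        intro h1 h2
        rcases Nat.lt_or_ge 1 (j+1) with hj | hj
        · have hj1 : 1 ≤ j := by omega
          have hjk : j ≤ k - 1 := by omega
          obtain ⟨hpsdj, hmono⟩ := ih hj1 (by omega)
          have hstep := hchain j hj1 hjk
          have habs : (matAbs (ptB (ω j))).PosSemidef := matAbs_posSemidef _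
          have hpsdj1 : (ω (j+1)).PosSemidef := by
            have := hstep.add habs
            simpa using this
          refine ⟨hpsdj1, le_trans hmono ?_⟩
          -- traceNorm (ptB (ω j)) ≤ (ω (j+1)).trace.re ≤ traceNorm (ptB (ω (j+1)))
          have key1 : traceNorm (ptB (ω j)) ≤ (ω (j+1)).trace.re := by
            have := trace_re_mono hstep
            have heq : traceNorm (ptB (ω j)) = (matAbs (ptB (ω j))).trace.re := rfl
            linarith [this]
          have key2 : (ω (j+1)).trace.re ≤ traceNorm (ptB (ω (j+1))) := by
            have hherm : (ptB (ω (j+1))).IsHermitian := isHermitian_ptB hpsdj1.isHermitian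
            have := trace_re_le_traceNorm hherm
            rwa [trace_ptB] at this
          linarith
        · have : j + 1 = 1 := by omega
          rw [this, hω1]
          exact ⟨hρ, le_refl _⟩
    obtain ⟨-, hmono⟩ := main k (by omega) le_rfl
    have hle : traceNorm (ptB ρ) ≤ 1 := by
      rw [← hω1]; exact le_trans hmono hnorm
    have hherm : (ptB ρ).IsHermitian := isHermitian_ptB hρ.isHermitian
    refine posSemidef_of_traceNorm_le hherm ?_
    have : (ptB ρ).trace.re = 1 := by rw [trace_ptB, htr]; rfl
    rw [this]
    exact hle
  · intro hppt
    refine ⟨hρ, fun i => if i % 2 = 1 then ρ else ptB ρ, by norm_num, ?_, ?_⟩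
    · intro i hi1 hik
      have hcase : matAbs (ptB (if i % 2 = 1 then ρ else ptB ρ))
          = (if (i+1) % 2 = 1 then ρ else ptB ρ) := by
        rcases Nat.even_or_odd i with he | ho
        · have h1 : i % 2 = 0 := Nat.even_iff.mp he
          have h2 : (i+1) % 2 = 1 := by omega
          simp only [h1, h2]
          norm_num
          rw [ptB_ptB, matAbs_of_posSemidef hρ]
        · have h1 : i % 2 = 1 := Nat.odd_iff.mp ho
          have h2 : (i+1) % 2 = 0 := by omega
          simp only [h1, h2]
          norm_num
          exact matAbs_of_posSemidef hppt
      rw [hcase, sub_self]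
      exact Matrix.PosSemidef.zero
    · have htr' : ∀ N : Matrix (A×B) (A×B) ℂ, N = ρ ∨ N = ptB ρ → traceNorm (ptB N) ≤ 1 := by
        rintro N (rfl | rfl)
        · rw [posSemidef_traceNorm_eq hppt, trace_ptB, htr]; norm_num
        · rw [ptB_ptB, posSemidef_traceNorm_eq hρ, htr]; norm_num
      apply htr'
      by_cases h : k % 2 = 1
      · left; simp [h]
      · right; simp [h]
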